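/- Let X be a Banach space and Y a closed subspace. If the pair (X*, Y^⊥) has the π_λ-property, then for every finite-dimensional subspace F ⊆ X* and every ε > 0 there exists a finite-rank bounded projection P : X → X with P(Y) ⊆ Y, ‖P‖ ≤ λ + ε, and P* x* = x* for all x* ∈ F. -/

import Mathlib

set_option maxHeartbeats 1600000
set_option synthInstance.maxHeartbeats 1000000


open NormedSpace

/-- The Banach-space adjoint (dual map) of a continuous linear map. -/
noncomputable def dualOp {X Y : Type*} [NormedAddCommGroup X] [NormedSpace ℝ X]
    [NormedAddCommGroup Y] [NormedSpace ℝ Y] (T : X →L[ℝ] Y) :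
    StrongDual ℝ Y →L[ℝ] StrongDual ℝ X :=
  (ContinuousLinearMap.compSL X Y ℝ (RingHom.id ℝ) (RingHom.id ℝ)).flip T

/-- The annihilator of a subspace in the continuous dual. -/
noncomputable def ann {X : Type*} [NormedAddCommGroup X] [NormedSpace ℝ X]
    (U : Submodule ℝ X) : Submodule ℝ (StrongDual ℝ X) where
  carrier := {f | ∀ u ∈ U, f u = 0}
  zero_mem' := by intro u hu; simp
  add_mem' := by intro f g hf hg u hu; simp [hf u hu, hg u hu]
  smul_mem' := by intro c f hf u hu; simp [hf u hu]

/-- A continuous linear map has finite rank. -/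
def FinRank {X Y : Type*} [NormedAddCommGroup X] [NormedSpace ℝ X]
    [NormedAddCommGroup Y] [NormedSpace ℝ Y] (T : X →L[ℝ] Y) : Prop :=
  FiniteDimensional ℝ (LinearMap.range (T : X →ₗ[ℝ] Y))

/-- The pair `(Z, W)` has the `λ`-bounded approximation property. -/
def HasBAPPair (lam : ℝ) {Z : Type*} [NormedAddCommGroup Z] [NormedSpace ℝ Z]
    (W : Submodule ℝ Z) : Prop :=
  ∀ E : Submodule ℝ Z, FiniteDimensional ℝ E → ∀ ε : ℝ, 0 < ε →
    ∃ S : Z →L[ℝ] Z, FinRank S ∧ (∀ w ∈ W, S w ∈ W) ∧ ‖S‖ ≤ lam + ε ∧ ∀ z ∈ E, S z = z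

/-- The pair `(Z, W)` has the `π_λ`-property. -/
def HasPiPair (lam : ℝ) {Z : Type*} [NormedAddCommGroup Z] [NormedSpace ℝ Z]
    (W : Submodule ℝ Z) : Prop :=
  ∀ E : Submodule ℝ Z, FiniteDimensional ℝ E → ∀ ε : ℝ, 0 < ε →
    ∃ P : Z →L[ℝ] Z, FinRank P ∧ (∀ z, P (P z) = P z) ∧ (∀ w ∈ W, P w ∈ W) ∧
      ‖P‖ ≤ lam + ε ∧ ∀ z ∈ E, P z = z

/-- The pair `(Z, W)` has the `π_λ`-duality property. -/
def HasPiDualPair (lam : ℝ) {Z : Type*} [NormedAddCommGroup Z] [NormedSpace ℝ Z]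
    (W : Submodule ℝ Z) : Prop :=
  ∀ E : Submodule ℝ Z, FiniteDimensional ℝ E →
    ∀ F : Submodule ℝ (StrongDual ℝ Z), FiniteDimensional ℝ F → ∀ ε : ℝ, 0 < ε →
      ∃ P : Z →L[ℝ] Z, FinRank P ∧ (∀ z, P (P z) = P z) ∧ (∀ w ∈ W, P w ∈ W) ∧
        ‖P‖ ≤ lam + ε ∧ (∀ z ∈ E, P z = z) ∧ ∀ f ∈ F, dualOp P f = f


section Aux

variable {X : Type*} [NormedAddCommGroup X] [NormedSpace ℝ X]

/-- Independent continuous functionals admit a biorthogonal family of vectors. -/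
lemma exists_dual_family {ι : Type*} [Fintype ι] [DecidableEq ι]
    (g : ι → StrongDual ℝ X) (hg : LinearIndependent ℝ g) :
    ∃ z : ι → X, ∀ i j, g i (z j) = if i = j then 1 else 0 := by
  classical
  let Φ : X →ₗ[ℝ] EuclideanSpace ℝ ι :=
    (WithLp.linearEquiv 2 ℝ (ι → ℝ)).symm.toLinearMap.comp
      (LinearMap.pi fun i => (g i : X →ₗ[ℝ] ℝ))
  have hΦ : ∀ (v : X) (i : ι), Φ v i = g i v := fun v i => rfl
  have hrange : LinearMap.range Φ = ⊤ := by
    by_contra hne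
    have hob : (LinearMap.range Φ)ᗮ ≠ ⊥ := fun hbot => hne (Submodule.orthogonal_eq_bot_iff.1 hbot)
    obtain ⟨c, hc, hc0⟩ := Submodule.exists_mem_ne_zero_of_ne_bot hob
    have hzero : ∀ v : X, ∑ i, g i v * c i = 0 := by
      intro v
      have := (Submodule.mem_orthogonal _ c).1 hc (Φ v) (LinearMap.mem_range_self _ v)
      simpa [PiLp.inner_apply, hΦ, mul_comm] using this
    have hcoef : ∀ i, c i = 0 := by
      have : ∑ i, c i • g i = 0 := by
        ext v
        simpa [mul_comm] using hzero v
      exact Fintype.linearIndependent_iff.1 hg c this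
    exact hc0 (by ext i; exact hcoef i)
  have hsurj : ∀ w : EuclideanSpace ℝ ι, ∃ v : X, Φ v = w := by
    intro w
    have : w ∈ LinearMap.range Φ := hrange ▸ Submodule.mem_top
    exact this
  choose z hz using fun j => hsurj ((WithLp.equiv 2 (ι → ℝ)).symm (Pi.single j 1))
  refine ⟨z, fun i j => ?_⟩
  have := congrFun (congrArg (fun w => (WithLp.equiv 2 (ι → ℝ)) w) (hz j)) i
  simpa [hΦ, Pi.single_apply] using this

lemma net_lemma {ι : Type*} [Fintype ι] [DecidableEq ι]
    (g : ι → StrongDual ℝ X) (z : ι → X) (hz : ∀ i j, g i (z j) = if i = j then 1 else 0)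
    (δ : ℝ) (hδ : 0 < δ) :
    ∃ t : Finset X, (∀ w ∈ t, ‖w‖ ≤ 1) ∧
      ∀ (ξ : ι → X) (N : ℝ), (∀ w ∈ t, ‖∑ i, g i w • ξ i‖ ≤ N) →
        ∀ v : X, ‖v‖ ≤ 1 → ‖∑ i, g i v • ξ i‖ ≤ (1 + δ) * N := by
  classical
  set Z : ℝ := ∑ j, ‖z j‖ with hZdef
  have hZ0 : 0 ≤ Z := Finset.sum_nonneg fun _ _ => norm_nonneg _
  set δ' : ℝ := δ / ((1 + δ) * (1 + Z)) with hδ'def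
  have hδ' : 0 < δ' := div_pos hδ (by positivity)
  set κ : X →L[ℝ] (ι → ℝ) := ContinuousLinearMap.pi g with hκdef
  have hκ : ∀ (v : X) (i : ι), κ v i = g i v := fun v i => rfl
  have hTb : TotallyBounded (κ '' Metric.closedBall 0 1) := by
    have hsub : κ '' Metric.closedBall 0 1 ⊆ Metric.closedBall 0 ‖κ‖ := by
      rintro _ ⟨v, hv, rfl⟩
      simp only [Metric.mem_closedBall, dist_zero_right]
      calc ‖κ v‖ ≤ ‖κ‖ * ‖v‖ := κ.le_opNorm v
      _ ≤ ‖κ‖ * 1 := by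
            exact mul_le_mul_of_nonneg_left (by simpa [dist_zero_right] using hv) (norm_nonneg _)
      _ = ‖κ‖ := mul_one _
    exact (isCompact_closedBall (0 : ι → ℝ) ‖κ‖).totallyBounded.subset hsub
  obtain ⟨t', ht'sub, ht'fin, ht'cov⟩ := (totallyBounded_iff_subset.1 hTb)
    {p : (ι → ℝ) × (ι → ℝ) | dist p.1 p.2 < δ'} (Metric.dist_mem_uniformity hδ')
  have hpick : ∀ y ∈ t', ∃ v : X, ‖v‖ ≤ 1 ∧ κ v = y := by
    intro y hy
    obtain ⟨v, hv, rfl⟩ := ht'sub hy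
    exact ⟨v, by simpa [dist_zero_right] using hv, rfl⟩
  choose pick hpick1 hpick2 using hpick
  refine ⟨ht'fin.toFinset.attach.image (fun y => pick y.1 (ht'fin.mem_toFinset.1 y.2)), ?_, ?_⟩
  · intro w hw
    obtain ⟨y, _, rfl⟩ := Finset.mem_image.1 hw
    exact hpick1 _ _
  intro ξ N hN v hv
  set SS : Set ℝ := {a | ∃ u : X, ‖u‖ ≤ 1 ∧ a = ‖∑ i, g i u • ξ i‖} with hSSdef
  have hbdd : BddAbove SS := by
    refine ⟨∑ i, ‖g i‖ * ‖ξ i‖, ?_⟩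
    rintro a ⟨u, hu, rfl⟩
    calc ‖∑ i, g i u • ξ i‖ ≤ ∑ i, ‖g i u • ξ i‖ := norm_sum_le _ _
    _ ≤ ∑ i, ‖g i‖ * ‖ξ i‖ := by
        refine Finset.sum_le_sum fun i _ => ?_
        rw [norm_smul]
        have : ‖g i u‖ ≤ ‖g i‖ := by
          calc ‖g i u‖ ≤ ‖g i‖ * ‖u‖ := (g i).le_opNorm u
          _ ≤ ‖g i‖ * 1 := mul_le_mul_of_nonneg_left hu (norm_nonneg _)
          _ = ‖g i‖ := mul_one _
        exact mul_le_mul_of_nonneg_right this (norm_nonneg _)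
  have h0SS : (0 : ℝ) ∈ SS := ⟨0, by simp, by simp⟩
  have hne : SS.Nonempty := ⟨0, h0SS⟩
  set s : ℝ := sSup SS with hsdef
  have hs0 : 0 ≤ s := le_csSup hbdd h0SS
  have hgen : ∀ u : X, ‖∑ i, g i u • ξ i‖ ≤ ‖u‖ * s := by
    intro u
    rcases eq_or_ne u 0 with rfl | hu0
    · simp
    · have hnorm : ‖(‖u‖⁻¹ • u)‖ ≤ 1 := by
        rw [norm_smul, norm_inv, norm_norm]
        rw [inv_mul_cancel₀ (norm_ne_zero_iff.2 hu0)]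
      have hmem : ‖∑ i, g i (‖u‖⁻¹ • u) • ξ i‖ ∈ SS := ⟨_, hnorm, rfl⟩
      have hle : ‖∑ i, g i (‖u‖⁻¹ • u) • ξ i‖ ≤ s := le_csSup hbdd hmem
      have : ∑ i, g i u • ξ i = ‖u‖ • ∑ i, g i (‖u‖⁻¹ • u) • ξ i := by
        rw [Finset.smul_sum]
        refine Finset.sum_congr rfl fun i _ => ?_
        rw [map_smul, smul_eq_mul, smul_smul]
        congr 1
        have h := norm_ne_zero_iff.2 hu0
        field_simp
      rw [this, norm_smul, norm_norm]
      exact mul_le_mul_of_nonneg_left hle (norm_nonneg _)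
  have key : ∀ a ∈ SS, a ≤ N + (δ / (1 + δ)) * s := by
    rintro a ⟨u, hu, rfl⟩
    have hκu : κ u ∈ κ '' Metric.closedBall 0 1 :=
      ⟨u, by simpa [dist_zero_right] using hu, rfl⟩
    obtain ⟨y, hyt', hyd⟩ := Set.mem_iUnion₂.1 (ht'cov hκu)
    have hydist : dist (κ u) y < δ' := hyd
    set w : X := pick y hyt' with hwdef
    have hκw : κ w = y := hpick2 _ _
    set c : ι → ℝ := fun i => g i u - g i w with hcdef
    have hc : ∀ i, |c i| < δ' := by
      intro i
      have := dist_le_pi_dist (κ u) y i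
      rw [← hκw] at hydist this
      have h2 : dist (κ u i) (κ w i) ≤ dist (κ u) (κ w) := dist_le_pi_dist _ _ i
      calc |c i| = dist (g i u) (g i w) := by rw [Real.dist_eq]
      _ = dist (κ u i) (κ w i) := rfl
      _ ≤ dist (κ u) (κ w) := h2
      _ < δ' := hydist
    set u' : X := ∑ j, c j • z j with hu'def
    have hgu' : ∀ i, g i u' = c i := by
      intro i
      rw [hu'def, map_sum]
      simp only [map_smul, smul_eq_mul, hz]
      rw [Finset.sum_congr rfl (fun j _ => by rw [mul_ite, mul_one, mul_zero])]
      simp [Finset.sum_ite_eq]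
    have hsplit : ∑ i, g i u • ξ i = (∑ i, g i w • ξ i) + ∑ i, g i u' • ξ i := by
      rw [← Finset.sum_add_distrib]
      refine Finset.sum_congr rfl fun i _ => ?_
      rw [hgu' i, hcdef, ← add_smul]
      ring_nf
    have hu'norm : ‖u'‖ ≤ δ' * Z := by
      calc ‖u'‖ ≤ ∑ j, ‖c j • z j‖ := norm_sum_le _ _
      _ ≤ ∑ j, δ' * ‖z j‖ := by
          refine Finset.sum_le_sum fun j _ => ?_
          rw [norm_smul, Real.norm_eq_abs]
          exact mul_le_mul_of_nonneg_right (le_of_lt (hc j)) (norm_nonneg _)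
      _ = δ' * Z := by rw [← Finset.mul_sum]
    have hwmem : w ∈ ht'fin.toFinset.attach.image
        (fun y => pick y.1 (ht'fin.mem_toFinset.1 y.2)) := by
      refine Finset.mem_image.2 ⟨⟨y, ht'fin.mem_toFinset.2 hyt'⟩, Finset.mem_attach _ _, rfl⟩
    have hδ'Z : δ' * Z ≤ δ / (1 + δ) := by
      rw [hδ'def]
      rw [div_mul_eq_mul_div, div_le_div_iff₀ (by positivity) (by positivity)]
      ring_nf
      nlinarith [hδ.le, hZ0]
    calc ‖∑ i, g i u • ξ i‖ ≤ ‖∑ i, g i w • ξ i‖ + ‖∑ i, g i u' • ξ i‖ := by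
          rw [hsplit]; exact norm_add_le _ _
    _ ≤ N + ‖u'‖ * s := add_le_add (hN w hwmem) (hgen u')
    _ ≤ N + (δ / (1 + δ)) * s := by
        refine add_le_add_right (mul_le_mul_of_nonneg_right (hu'norm.trans hδ'Z) hs0) _
  have hssup : s ≤ N + (δ / (1 + δ)) * s := csSup_le hne key
  have hsN : s ≤ (1 + δ) * N := by
    have h1δ : (0:ℝ) < 1 + δ := by linarith
    have hfrac : δ / (1 + δ) = 1 - 1/(1+δ) := by field_simp; ring
    rw [hfrac] at hssup
    have hstep : (1/(1+δ)) * s ≤ N := by nlinarith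
    calc s = (1+δ) * ((1/(1+δ)) * s) := by field_simp
    _ ≤ (1+δ) * N := mul_le_mul_of_nonneg_left hstep h1δ.le
  have hfin : ‖∑ i, g i v • ξ i‖ ≤ s := le_csSup hbdd ⟨v, hv, rfl⟩
  exact hfin.trans hsN

/-- A norm-one continuous functional almost attains its norm. -/
lemma almost_attain (T : StrongDual ℝ X) {η : ℝ} (hη : 0 < η) :
    ∃ x : X, ‖x‖ ≤ 1 ∧ ‖T‖ - η ≤ T x := by
  by_cases hT : ‖T‖ ≤ η
  · exact ⟨0, by simp, by simp only [map_zero]; linarith⟩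
  · push_neg at hT
    have hc0 : 0 ≤ ‖T‖ - η := by linarith
    have hnot : ¬ (‖T‖ ≤ ‖T‖ - η) := by linarith
    have : ¬ ∀ x : X, ‖T x‖ ≤ (‖T‖ - η) * ‖x‖ := by
      intro hall
      exact hnot (ContinuousLinearMap.opNorm_le_bound T hc0 hall)
    push_neg at this
    obtain ⟨x, hx⟩ := this
    have hx0 : x ≠ 0 := by
      rintro rfl
      rw [norm_zero, mul_zero, map_zero, norm_zero] at hx
      exact lt_irrefl 0 hx
    set x' : X := ‖x‖⁻¹ • x with hx'def
    have hx'1 : ‖x'‖ = 1 := by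
      rw [hx'def, norm_smul, norm_inv, norm_norm, inv_mul_cancel₀ (norm_ne_zero_iff.2 hx0)]
    have hTx' : (‖T‖ - η) < ‖T x'‖ := by
      rw [hx'def, map_smul, norm_smul, norm_inv, norm_norm]
      rw [lt_inv_mul_iff₀ (norm_pos_iff.2 hx0)]
      calc (‖x‖ : ℝ) * (‖T‖ - η) = (‖T‖ - η) * ‖x‖ := mul_comm _ _
      _ < ‖T x‖ := hx
    rcases le_or_gt 0 (T x') with hpos | hneg
    · exact ⟨x', hx'1.le, by rw [Real.norm_eq_abs, abs_of_nonneg hpos] at hTx'; linarith⟩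
    · refine ⟨-x', by rw [norm_neg]; exact hx'1.le, ?_⟩
      rw [map_neg]
      rw [Real.norm_eq_abs, abs_of_neg hneg] at hTx'
      linarith

lemma crux (Y : Submodule ℝ X) {ι₁ ι₂ Λ : Type*} [Fintype ι₁] [Fintype ι₂] [Fintype Λ]
    [DecidableEq (ι₁ ⊕ ι₂)] [DecidableEq Λ]
    (g : ι₁ ⊕ ι₂ → StrongDual ℝ X) (φ : ι₁ ⊕ ι₂ → StrongDual ℝ (StrongDual ℝ X))
    (hφY : ∀ i, ∀ f' ∈ ann Y, φ (Sum.inl i) f' = 0)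
    (w : Λ → X)
    (e : ι₁ ⊕ ι₂ → Λ) (s : ℝ) (hs : 0 < s)
    (hwe : ∀ i i', g i' (w (e i)) = if i' = i then s else 0)
    (ρ : ℝ) (hρ0 : 0 ≤ ρ) (hρ : ∀ k, ‖∑ i, g i (w k) • φ i‖ ≤ ρ)
    (h : ι₁ ⊕ ι₂ → StrongDual ℝ X) (S : ℝ) (hS0 : 0 ≤ S)
    (hS : ∀ ξ : ι₁ ⊕ ι₂ → X, (∀ i₁, ξ (Sum.inl i₁) ∈ Y) →
      (∀ k, ‖∑ i, g i (w k) • ξ i‖ ≤ 1) → ∑ i, h i (ξ i) ≤ S) :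
    ∑ i, φ i (h i) ≤ ρ * S := by
  classical
  -- the auxiliary linear map A
  set Alin : ((ι₁ ⊕ ι₂) → X) →ₗ[ℝ] (Λ → X) :=
    LinearMap.pi (fun k => ∑ i, g i (w k) • LinearMap.proj i) with hAdef
  have hA : ∀ ξ k, Alin ξ k = ∑ i, g i (w k) • ξ i := by
    intro ξ k
    simp [hAdef, LinearMap.pi_apply, LinearMap.sum_apply, LinearMap.smul_apply]
  -- the subspace 𝒴
  set 𝒴 : Submodule ℝ ((ι₁ ⊕ ι₂) → X) :=
    Submodule.pi Set.univ (fun i => Sum.elim (fun _ => Y) (fun _ => (⊤ : Submodule ℝ X)) i)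
    with h𝒴def
  have hmem𝒴 : ∀ ξ, ξ ∈ 𝒴 ↔ ∀ i₁, ξ (Sum.inl i₁) ∈ Y := by
    intro ξ
    constructor
    · intro hξ i₁
      exact hξ (Sum.inl i₁) trivial
    · intro hξ i _
      cases i with
      | inl i₁ => exact hξ i₁
      | inr i₂ => exact Submodule.mem_top
  set D : Submodule ℝ (Λ → X) := 𝒴.map Alin with hDdef
  -- the functional ĥ
  set hhat : (Λ → X) →ₗ[ℝ] ℝ :=
    ∑ i, s⁻¹ • ((h i : X →ₗ[ℝ] ℝ).comp (LinearMap.proj (e i))) with hhatdef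
  have hhat_apply : ∀ ζ, hhat ζ = ∑ i, s⁻¹ * h i (ζ (e i)) := by
    intro ζ
    simp [hhatdef, LinearMap.sum_apply, LinearMap.smul_apply, smul_eq_mul]
  have hAe : ∀ (ξ : (ι₁ ⊕ ι₂) → X) i, Alin ξ (e i) = s • ξ i := by
    intro ξ i
    rw [hA]
    rw [Finset.sum_congr rfl (fun i' _ => by rw [hwe i i', ite_smul, zero_smul])]
    simp [Finset.sum_ite_eq']
  have hhatA : ∀ ξ : (ι₁ ⊕ ι₂) → X, hhat (Alin ξ) = ∑ i, h i (ξ i) := by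
    intro ξ
    rw [hhat_apply]
    refine Finset.sum_congr rfl fun i _ => ?_
    rw [hAe, map_smul, smul_eq_mul, ← mul_assoc, inv_mul_cancel₀ (ne_of_gt hs), one_mul]
  -- bound on D
  have hone : ∀ ξ, ξ ∈ 𝒴 → hhat (Alin ξ) ≤ S * ‖Alin ξ‖ := by
    intro ξ hξ
    rcases eq_or_ne ‖Alin ξ‖ 0 with hz0 | hz0
    · have hA0 : Alin ξ = 0 := norm_eq_zero.1 hz0
      rw [hA0, map_zero]
      simp
    · have hr : 0 < ‖Alin ξ‖ := lt_of_le_of_ne (norm_nonneg _) (Ne.symm hz0)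
      set r : ℝ := ‖Alin ξ‖ with hrdef
      have hmem' : (r⁻¹ • ξ) ∈ 𝒴 := Submodule.smul_mem _ _ hξ
      have hbd : ∀ k, ‖∑ i, g i (w k) • (r⁻¹ • ξ) i‖ ≤ 1 := by
        intro k
        have : ∑ i, g i (w k) • (r⁻¹ • ξ) i = r⁻¹ • (Alin ξ k) := by
          rw [hA, Finset.smul_sum]
          refine Finset.sum_congr rfl fun i _ => ?_
          simp [smul_smul, mul_comm]
        rw [this, norm_smul, norm_inv, norm_norm]
        rw [inv_mul_le_iff₀ hr, mul_one]
        exact norm_le_pi_norm (Alin ξ) k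
      have hsum := hS _ (fun i₁ => (hmem𝒴 _).1 hmem' i₁) hbd
      have hsum' : ∑ i, h i ((r⁻¹ • ξ) i) = r⁻¹ * ∑ i, h i (ξ i) := by
        rw [Finset.mul_sum]
        refine Finset.sum_congr rfl fun i _ => ?_
        simp [smul_eq_mul]
      rw [hsum'] at hsum
      rw [hhatA]
      calc ∑ i, h i (ξ i) = r * (r⁻¹ * ∑ i, h i (ξ i)) := by
            field_simp
      _ ≤ r * S := mul_le_mul_of_nonneg_left hsum hr.le
      _ = S * r := mul_comm _ _
  have habs : ∀ ζ : ↥D, ‖hhat (ζ : Λ → X)‖ ≤ S * ‖(ζ : Λ → X)‖ := by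
    intro ζ
    obtain ⟨ξ, hξ, hAξ⟩ := ζ.2
    rw [← hAξ]
    rw [Real.norm_eq_abs, abs_le]
    constructor
    · have := hone (-ξ) (Submodule.neg_mem _ hξ)
      rw [map_neg, map_neg, norm_neg] at this
      linarith
    · exact hone ξ hξ
  set f : D →L[ℝ] ℝ := (hhat.comp D.subtype).mkContinuous S
    (fun ζ => habs ζ) with hfdef
  obtain ⟨U, hUext, hUnorm⟩ := exists_extension_norm_eq D f
  have hUS : ‖U‖ ≤ S := by
    rw [hUnorm]
    exact LinearMap.mkContinuous_norm_le _ hS0 _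
  -- coordinate functionals
  set sing : (k : Λ) → X →L[ℝ] (Λ → X) := fun k =>
    (LinearMap.single ℝ (fun _ : Λ => X) k).mkContinuous 1
      (fun x => by
        have hcoe : (LinearMap.single ℝ (fun _ : Λ => X) k) x = Pi.single k x := rfl
        rw [hcoe, Pi.norm_single, one_mul]) with hsingdef
  have hsing_apply : ∀ k x, sing k x = Pi.single k x := fun k x => rfl
  set u : Λ → StrongDual ℝ X := fun k => U.comp (sing k) with hudef
  have hu_apply : ∀ k x, u k x = U (Pi.single k x) := fun k x => rfl
  have hdecomp : ∀ ζ : Λ → X, U ζ = ∑ k, u k (ζ k) := by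
    intro ζ
    conv_lhs => rw [← Finset.univ_sum_single ζ]
    rw [map_sum]
    exact Finset.sum_congr rfl fun k _ => rfl
  have husum : ∑ k, ‖u k‖ ≤ ‖U‖ := by
    have hcard : (0:ℝ) < (Fintype.card Λ : ℝ) + 1 := by positivity
    refine le_of_forall_pos_le_add ?_
    intro δ hδ
    have hpick : ∀ k : Λ, ∃ x : X, ‖x‖ ≤ 1 ∧ ‖u k‖ - δ / ((Fintype.card Λ : ℝ) + 1) ≤ u k x :=
      fun k => almost_attain (u k) (by positivity)
    choose x hx1 hx2 using hpick
    have hv1 : ‖(fun k => x k : Λ → X)‖ ≤ 1 :=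
      pi_norm_le_iff_of_nonneg zero_le_one |>.2 hx1
    have hUv : U (fun k => x k) ≤ ‖U‖ := by
      calc U (fun k => x k) ≤ ‖U (fun k => x k)‖ := le_abs_self _
      _ ≤ ‖U‖ * ‖(fun k => x k : Λ → X)‖ := U.le_opNorm _
      _ ≤ ‖U‖ * 1 := mul_le_mul_of_nonneg_left hv1 (norm_nonneg _)
      _ = ‖U‖ := mul_one _
    have hsum : ∑ k, (‖u k‖ - δ / ((Fintype.card Λ : ℝ) + 1)) ≤ U (fun k => x k) := by
      rw [hdecomp]
      exact Finset.sum_le_sum fun k _ => hx2 k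
    rw [Finset.sum_sub_distrib] at hsum
    have hcount : ∑ _k : Λ, δ / ((Fintype.card Λ : ℝ) + 1)
        = (Fintype.card Λ : ℝ) * (δ / ((Fintype.card Λ : ℝ) + 1)) := by
      rw [Finset.sum_const, Finset.card_univ, nsmul_eq_mul]
    have hlt : (Fintype.card Λ : ℝ) * (δ / ((Fintype.card Λ : ℝ) + 1)) ≤ δ := by
      rw [mul_div_assoc']
      rw [div_le_iff₀ hcard]
      nlinarith [hδ.le]
    linarith [hsum.trans hUv]
  -- the functionals h'
  set h' : (ι₁ ⊕ ι₂) → StrongDual ℝ X := fun i => ∑ k, g i (w k) • u k with h'def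
  have hUA : ∀ ξ : (ι₁ ⊕ ι₂) → X, U (Alin ξ) = ∑ i, h' i (ξ i) := by
    intro ξ
    rw [hdecomp]
    have : ∀ k, u k (Alin ξ k) = ∑ i, g i (w k) * u k (ξ i) := by
      intro k
      rw [hA, map_sum]
      refine Finset.sum_congr rfl fun i _ => ?_
      rw [map_smul, smul_eq_mul]
    rw [Finset.sum_congr rfl fun k _ => this k]
    rw [Finset.sum_comm]
    refine Finset.sum_congr rfl fun i _ => ?_
    rw [h'def]
    simp [ContinuousLinearMap.sum_apply, ContinuousLinearMap.smul_apply, smul_eq_mul]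
  have hagree : ∀ ξ, ξ ∈ 𝒴 → ∑ i, h' i (ξ i) = ∑ i, h i (ξ i) := by
    intro ξ hξ
    rw [← hUA]
    have hmemD : Alin ξ ∈ D := Submodule.mem_map_of_mem hξ
    have := hUext ⟨Alin ξ, hmemD⟩
    rw [this]
    rw [hfdef]
    show hhat (Alin ξ) = _
    simpa using hhatA ξ
  -- coordinatewise consequences
  have hcollapse : ∀ (i₀ : ι₁ ⊕ ι₂) (x : X) (p : (ι₁ ⊕ ι₂) → StrongDual ℝ X),
      ∑ i, p i ((Pi.single i₀ x : (ι₁ ⊕ ι₂) → X) i) = p i₀ x := by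
    intro i₀ x p
    rw [Finset.sum_eq_single i₀]
    · rw [Pi.single_eq_same]
    · intro b _ hb
      rw [Pi.single_eq_of_ne hb, map_zero]
    · intro hb
      exact absurd (Finset.mem_univ i₀) hb
  have hsingle𝒴 : ∀ (i₀ : ι₁ ⊕ ι₂) (x : X), (∀ i₁, Sum.inl i₁ = i₀ → x ∈ Y) →
      (Pi.single i₀ x : (ι₁ ⊕ ι₂) → X) ∈ 𝒴 := by
    intro i₀ x hx
    rw [hmem𝒴]
    intro i₁
    rcases eq_or_ne (Sum.inl i₁ : ι₁ ⊕ ι₂) i₀ with heq | hne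
    · rw [heq, Pi.single_eq_same]
      exact hx i₁ heq
    · rw [Pi.single_eq_of_ne hne]
      exact Submodule.zero_mem _
  have hinr : ∀ i₂ : ι₂, h' (Sum.inr i₂) = h (Sum.inr i₂) := by
    intro i₂
    ext x
    have := hagree (Pi.single (Sum.inr i₂) x)
      (hsingle𝒴 _ x (fun i₁ heq => by simp at heq))
    rw [hcollapse, hcollapse] at this
    exact this
  have hinl : ∀ (i₁ : ι₁), h (Sum.inl i₁) - h' (Sum.inl i₁) ∈ ann Y := by
    intro i₁
    intro y hy
    have := hagree (Pi.single (Sum.inl i₁) y)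
      (hsingle𝒴 _ y (fun _ _ => hy))
    rw [hcollapse, hcollapse] at this
    simp [ContinuousLinearMap.sub_apply, this]
  have hφeq : ∑ i, φ i (h i) = ∑ i, φ i (h' i) := by
    refine Finset.sum_congr rfl fun i _ => ?_
    cases i with
    | inl i₁ =>
      have hd := hφY i₁ _ (hinl i₁)
      rw [map_sub] at hd
      linarith
    | inr i₂ => rw [hinr i₂]
  rw [hφeq]
  have hswap : ∑ i, φ i (h' i) = ∑ k, (∑ i, g i (w k) • φ i) (u k) := by
    have : ∀ i, φ i (h' i) = ∑ k, g i (w k) * φ i (u k) := by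
      intro i
      rw [h'def, map_sum]
      refine Finset.sum_congr rfl fun k _ => ?_
      rw [map_smul, smul_eq_mul]
    rw [Finset.sum_congr rfl fun i _ => this i, Finset.sum_comm]
    refine Finset.sum_congr rfl fun k _ => ?_
    simp [ContinuousLinearMap.sum_apply, ContinuousLinearMap.smul_apply, smul_eq_mul]
  rw [hswap]
  calc ∑ k, (∑ i, g i (w k) • φ i) (u k) ≤ ∑ k, ρ * ‖u k‖ := by
        refine Finset.sum_le_sum fun k _ => ?_
        calc (∑ i, g i (w k) • φ i) (u k) ≤ ‖(∑ i, g i (w k) • φ i) (u k)‖ := le_abs_self _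
        _ ≤ ‖∑ i, g i (w k) • φ i‖ * ‖u k‖ := ContinuousLinearMap.le_opNorm _ _
        _ ≤ ρ * ‖u k‖ := mul_le_mul_of_nonneg_right (hρ k) (norm_nonneg _)
  _ = ρ * ∑ k, ‖u k‖ := by rw [Finset.mul_sum]
  _ ≤ ρ * ‖U‖ := mul_le_mul_of_nonneg_left husum hρ0
  _ ≤ ρ * S := mul_le_mul_of_nonneg_left hUS hρ0

lemma scale_bound {ι : Type*} [Fintype ι] (g : ι → StrongDual ℝ X) (x : ι → X) (C : ℝ) (hC : 0 ≤ C)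
    (hb : ∀ v : X, ‖v‖ ≤ 1 → ‖∑ i, g i v • x i‖ ≤ C) :
    ∀ v : X, ‖∑ i, g i v • x i‖ ≤ C * ‖v‖ := by
  intro v
  rcases eq_or_ne v 0 with rfl | hv0
  · simp
  · have hnorm : ‖(‖v‖⁻¹ • v)‖ ≤ 1 := by
      rw [norm_smul, norm_inv, norm_norm, inv_mul_cancel₀ (norm_ne_zero_iff.2 hv0)]
    have hle := hb _ hnorm
    have hrw : ∑ i, g i v • x i = ‖v‖ • ∑ i, g i (‖v‖⁻¹ • v) • x i := by
      rw [Finset.smul_sum]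
      refine Finset.sum_congr rfl fun i _ => ?_
      rw [map_smul, smul_eq_mul, smul_smul]
      congr 1
      have h := norm_ne_zero_iff.2 hv0
      field_simp
    rw [hrw, norm_smul, norm_norm, mul_comm]
    exact mul_le_mul_of_nonneg_right hle (norm_nonneg _)

lemma operator_helly {ι₁ ι₂ J : Type*} [Fintype ι₁] [Fintype ι₂] [Fintype J]
    (Y : Submodule ℝ X)
    (g : ι₁ ⊕ ι₂ → StrongDual ℝ X) (φ : ι₁ ⊕ ι₂ → StrongDual ℝ (StrongDual ℝ X))
    (hg : LinearIndependent ℝ g)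
    (hφY : ∀ i, ∀ f' ∈ ann Y, φ (Sum.inl i) f' = 0)
    (fam : J → StrongDual ℝ X)
    (ρ ε : ℝ) (hρ0 : 0 ≤ ρ) (hε : 0 < ε)
    (hρ : ∀ v : X, ‖∑ i, g i v • φ i‖ ≤ ρ * ‖v‖) :
    ∃ x : ι₁ ⊕ ι₂ → X, (∀ i₁, x (Sum.inl i₁) ∈ Y) ∧
      (∀ j i, fam j (x i) = φ i (fam j)) ∧
      ∀ v : X, ‖∑ i, g i v • x i‖ ≤ (ρ + ε) * ‖v‖ := by
  classical
  obtain ⟨z, hz⟩ := exists_dual_family g hg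
  set δ₀ : ℝ := min 1 (ε / (2 * (ρ + 1))) with hδ₀def
  have hδ₀ : 0 < δ₀ := lt_min one_pos (by positivity)
  obtain ⟨tnet, htnet1, htnetkey⟩ := net_lemma g z hz δ₀ hδ₀
  set s : ℝ := (1 + ∑ j, ‖z j‖)⁻¹ with hsdef
  have hzsum0 : 0 ≤ ∑ j, ‖z j‖ := Finset.sum_nonneg fun _ _ => norm_nonneg _
  have hs : 0 < s := by rw [hsdef]; positivity
  set w : (↥tnet ⊕ (ι₁ ⊕ ι₂)) → X := Sum.elim (fun k => (k : X)) (fun i => s • z i) with hwdef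
  have hw : ∀ k, ‖w k‖ ≤ 1 := by
    intro k
    cases k with
    | inl k => exact htnet1 k k.2
    | inr i =>
      show ‖s • z i‖ ≤ 1
      rw [norm_smul, Real.norm_eq_abs, abs_of_pos hs]
      have hle : ‖z i‖ ≤ 1 + ∑ j, ‖z j‖ := by
        have := Finset.single_le_sum (f := fun j => ‖z j‖) (fun j _ => norm_nonneg _)
          (Finset.mem_univ i)
        linarith
      calc s * ‖z i‖ ≤ s * (1 + ∑ j, ‖z j‖) := mul_le_mul_of_nonneg_left hle hs.le
      _ = 1 := by rw [hsdef]; field_simp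
  have hwe : ∀ i i', g i' (w (Sum.inr i)) = if i' = i then s else 0 := by
    intro i i'
    show g i' (s • z i) = _
    rw [map_smul, smul_eq_mul, hz i' i, mul_ite, mul_one, mul_zero]
  have hρW : ∀ k, ‖∑ i, g i (w k) • φ i‖ ≤ ρ := by
    intro k
    calc ‖∑ i, g i (w k) • φ i‖ ≤ ρ * ‖w k‖ := hρ (w k)
    _ ≤ ρ * 1 := mul_le_mul_of_nonneg_left (hw k) hρ0
    _ = ρ := mul_one _
  -- the evaluation map L and target point p₀
  set L : ((ι₁ ⊕ ι₂) → X) →ₗ[ℝ] ((ι₁ ⊕ ι₂) × J → ℝ) :=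
    LinearMap.pi (fun p => (fam p.2 : X →ₗ[ℝ] ℝ).comp (LinearMap.proj p.1)) with hLdef
  have hL : ∀ ξ p, L ξ p = fam p.2 (ξ p.1) := fun ξ p => rfl
  set p₀ : ((ι₁ ⊕ ι₂) × J → ℝ) := fun p => φ p.1 (fam p.2) with hp₀def
  set 𝒴 : Submodule ℝ ((ι₁ ⊕ ι₂) → X) :=
    Submodule.pi Set.univ (fun i => Sum.elim (fun _ => Y) (fun _ => (⊤ : Submodule ℝ X)) i)
    with h𝒴def
  have hmem𝒴 : ∀ ξ, ξ ∈ 𝒴 ↔ ∀ i₁, ξ (Sum.inl i₁) ∈ Y := by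
    intro ξ
    constructor
    · intro hξ i₁; exact hξ (Sum.inl i₁) trivial
    · intro hξ i _
      cases i with
      | inl i₁ => exact hξ i₁
      | inr i₂ => exact Submodule.mem_top
  -- approximate solutions
  have hclosure : ∀ δ : ℝ, 0 < δ →
      p₀ ∈ closure (L '' {ξ | ξ ∈ 𝒴 ∧ ∀ k, ‖∑ i, g i (w k) • ξ i‖ ≤ ρ + δ}) := by
    intro δ hδ
    by_contra hp
    set Sδ : Set ((ι₁ ⊕ ι₂) → X) :=
      {ξ | ξ ∈ 𝒴 ∧ ∀ k, ‖∑ i, g i (w k) • ξ i‖ ≤ ρ + δ} with hSδdef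
    have hconvS : Convex ℝ Sδ := by
      rintro ξ hξ ξ' hξ' a b ha hb hab
      constructor
      · exact Submodule.add_mem _ (Submodule.smul_mem _ _ hξ.1) (Submodule.smul_mem _ _ hξ'.1)
      · intro k
        have hexp : ∑ i, g i (w k) • (a • ξ + b • ξ') i
            = a • (∑ i, g i (w k) • ξ i) + b • (∑ i, g i (w k) • ξ' i) := by
          rw [Finset.smul_sum, Finset.smul_sum, ← Finset.sum_add_distrib]
          refine Finset.sum_congr rfl fun i _ => ?_
          simp only [Pi.add_apply, Pi.smul_apply]
          module
        rw [hexp]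
        calc ‖a • (∑ i, g i (w k) • ξ i) + b • (∑ i, g i (w k) • ξ' i)‖
            ≤ ‖a • (∑ i, g i (w k) • ξ i)‖ + ‖b • (∑ i, g i (w k) • ξ' i)‖ := norm_add_le _ _
        _ ≤ a * (ρ + δ) + b * (ρ + δ) := by
            rw [norm_smul, norm_smul, Real.norm_eq_abs, Real.norm_eq_abs,
              abs_of_nonneg ha, abs_of_nonneg hb]
            exact add_le_add (mul_le_mul_of_nonneg_left (hξ.2 k) ha)
              (mul_le_mul_of_nonneg_left (hξ'.2 k) hb)
        _ = ρ + δ := by rw [← add_mul, hab, one_mul]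
    have hconv : Convex ℝ (closure (L '' Sδ)) := (hconvS.linear_image L).closure
    obtain ⟨ψ, uu, hψ1, hψ2⟩ := geometric_hahn_banach_closed_point hconv isClosed_closure hp
    set hfun : (ι₁ ⊕ ι₂) → StrongDual ℝ X :=
      fun i => ∑ j, ψ (Pi.single (i, j) (1:ℝ)) • fam j with hfundef
    have hψsum : ∀ q : ((ι₁ ⊕ ι₂) × J → ℝ), ψ q = ∑ pr, q pr * ψ (Pi.single pr (1:ℝ)) := by
      intro q
      conv_lhs => rw [← Finset.univ_sum_single q]
      rw [map_sum]
      refine Finset.sum_congr rfl fun pr _ => ?_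
      have : (Pi.single pr (q pr) : ((ι₁ ⊕ ι₂) × J) → ℝ)
          = q pr • (Pi.single pr (1:ℝ) : ((ι₁ ⊕ ι₂) × J) → ℝ) := by
        rw [← Pi.single_smul, smul_eq_mul, mul_one]
      rw [this, map_smul, smul_eq_mul]
    have hψL : ∀ ξ, ψ (L ξ) = ∑ i, hfun i (ξ i) := by
      intro ξ
      rw [hψsum]
      rw [Fintype.sum_prod_type]
      refine Finset.sum_congr rfl fun i _ => ?_
      rw [hfundef]
      simp only [ContinuousLinearMap.coe_sum', Finset.sum_apply,
        ContinuousLinearMap.coe_smul', Pi.smul_apply, smul_eq_mul]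
      refine Finset.sum_congr rfl fun j _ => ?_
      rw [hL]
      ring
    have hψp : ψ p₀ = ∑ i, φ i (hfun i) := by
      rw [hψsum]
      rw [Fintype.sum_prod_type]
      refine Finset.sum_congr rfl fun i _ => ?_
      rw [hfundef, map_sum]
      refine Finset.sum_congr rfl fun j _ => ?_
      rw [map_smul, smul_eq_mul, hp₀def]
      ring
    have h0S : (0 : ((ι₁ ⊕ ι₂) → X)) ∈ Sδ := by
      refine ⟨Submodule.zero_mem _, fun k => ?_⟩
      simp only [Pi.zero_apply, smul_zero, Finset.sum_const_zero, norm_zero]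
      positivity
    have hu0 : 0 < uu := by
      have := hψ1 (L 0) (subset_closure ⟨0, h0S, rfl⟩)
      rw [map_zero, map_zero] at this
      exact this
    have hρδ : 0 < ρ + δ := by positivity
    set S' : ℝ := uu / (ρ + δ) with hS'def
    have hS'0 : 0 ≤ S' := le_of_lt (div_pos hu0 hρδ)
    have hSbound : ∀ ξ : (ι₁ ⊕ ι₂) → X, (∀ i₁, ξ (Sum.inl i₁) ∈ Y) →
        (∀ k, ‖∑ i, g i (w k) • ξ i‖ ≤ 1) → ∑ i, hfun i (ξ i) ≤ S' := by
      intro ξ hξY hξb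
      have hmem : ((ρ + δ) • ξ) ∈ Sδ := by
        refine ⟨Submodule.smul_mem _ _ ((hmem𝒴 ξ).2 hξY), fun k => ?_⟩
        have : ∑ i, g i (w k) • ((ρ + δ) • ξ) i = (ρ + δ) • ∑ i, g i (w k) • ξ i := by
          rw [Finset.smul_sum]
          refine Finset.sum_congr rfl fun i _ => ?_
          simp only [Pi.smul_apply, map_smul, smul_eq_mul, smul_smul]
          ring_nf
        rw [this, norm_smul, Real.norm_eq_abs, abs_of_pos hρδ]
        calc (ρ + δ) * ‖∑ i, g i (w k) • ξ i‖ ≤ (ρ + δ) * 1 :=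
              mul_le_mul_of_nonneg_left (hξb k) hρδ.le
        _ = ρ + δ := mul_one _
      have hlt := hψ1 (L ((ρ + δ) • ξ)) (subset_closure ⟨_, hmem, rfl⟩)
      rw [map_smul] at hlt
      have : ψ ((ρ + δ) • L ξ) = (ρ + δ) * ψ (L ξ) := by
        rw [map_smul, smul_eq_mul]
      rw [this, hψL] at hlt
      rw [hS'def, le_div_iff₀ hρδ]
      calc (∑ i, hfun i (ξ i)) * (ρ + δ) = (ρ + δ) * ∑ i, hfun i (ξ i) := mul_comm _ _
      _ ≤ uu := hlt.le
    have hcrux := crux Y g φ hφY w Sum.inr s hs hwe ρ hρ0 hρW hfun S' hS'0 hSbound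
    have hfinal : ψ p₀ ≤ ρ * S' := by rw [hψp]; exact hcrux
    have hρS' : ρ * S' ≤ uu := by
      have hfrac : ρ / (ρ + δ) ≤ 1 := by
        rw [div_le_one hρδ]; linarith
      calc ρ * S' = (ρ / (ρ + δ)) * uu := by rw [hS'def]; ring
      _ ≤ 1 * uu := mul_le_mul_of_nonneg_right hfrac hu0.le
      _ = uu := one_mul _
    linarith [hψ2, hfinal, hρS']
  -- the image subspace and exact solutions
  set W₀ : Submodule ℝ ((ι₁ ⊕ ι₂) × J → ℝ) := 𝒴.map L with hW₀def
  have hp₀W : p₀ ∈ W₀ := by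
    have h1 := hclosure 1 one_pos
    have hsubset : (L '' {ξ | ξ ∈ 𝒴 ∧ ∀ k, ‖∑ i, g i (w k) • ξ i‖ ≤ ρ + 1}) ⊆ (W₀ : Set _) := by
      rintro _ ⟨ξ, hξ, rfl⟩
      exact Submodule.mem_map_of_mem hξ.1
    have hclosed : IsClosed (W₀ : Set ((ι₁ ⊕ ι₂) × J → ℝ)) :=
      Submodule.closed_of_finiteDimensional W₀
    exact (closure_minimal hsubset hclosed) h1
  haveI hWfin : FiniteDimensional ℝ ↥W₀ := inferInstance
  set bW := Module.finBasis ℝ ↥W₀ with hbWdef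
  have hpre : ∀ l, ∃ ξ, ξ ∈ 𝒴 ∧ L ξ = ((bW l : ↥W₀) : ((ι₁ ⊕ ι₂) × J → ℝ)) := by
    intro l
    obtain ⟨ξ, hξ, hLξ⟩ := Submodule.mem_map.1 (bW l).2
    exact ⟨ξ, hξ, hLξ⟩
  choose ξs hξs1 hξs2 using hpre
  set CW := fun l => LinearMap.toContinuousLinearMap (bW.coord l) with hCWdef
  set Cl : Fin (Module.finrank ℝ ↥W₀) → ℝ := fun l => ∑ i, ‖g i‖ * ‖ξs l i‖ with hCldef
  have hCl0 : ∀ l, 0 ≤ Cl l := fun l => Finset.sum_nonneg fun i _ => by positivity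
  have hClb : ∀ l k, ‖∑ i, g i (w k) • ξs l i‖ ≤ Cl l := by
    intro l k
    calc ‖∑ i, g i (w k) • ξs l i‖ ≤ ∑ i, ‖g i (w k) • ξs l i‖ := norm_sum_le _ _
    _ ≤ ∑ i, ‖g i‖ * ‖ξs l i‖ := by
        refine Finset.sum_le_sum fun i _ => ?_
        rw [norm_smul]
        refine mul_le_mul_of_nonneg_right ?_ (norm_nonneg _)
        calc ‖g i (w k)‖ ≤ ‖g i‖ * ‖w k‖ := (g i).le_opNorm _
        _ ≤ ‖g i‖ * 1 := mul_le_mul_of_nonneg_left (hw k) (norm_nonneg _)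
        _ = ‖g i‖ := mul_one _
  set κ' : ℝ := ∑ l, ‖CW l‖ * Cl l with hκ'def
  have hκ'0 : 0 ≤ κ' := Finset.sum_nonneg fun l _ => mul_nonneg (norm_nonneg (CW l)) (hCl0 l)
  set δ : ℝ := min 1 (ε / (4 * (1 + κ'))) with hδdef
  have hδpos : 0 < δ := lt_min one_pos (by positivity)
  have hcl := hclosure δ hδpos
  rw [Metric.mem_closure_iff] at hcl
  obtain ⟨q, hqmem, hqdist⟩ := hcl δ hδpos
  obtain ⟨ξ₀, hξ₀, rfl⟩ := hqmem
  have hLξ₀W : L ξ₀ ∈ W₀ := Submodule.mem_map_of_mem hξ₀.1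
  set d₀ : ((ι₁ ⊕ ι₂) × J → ℝ) := p₀ - L ξ₀ with hd₀def
  have hd₀W : d₀ ∈ W₀ := Submodule.sub_mem _ hp₀W hLξ₀W
  have hd₀n : ‖d₀‖ ≤ δ := by
    rw [hd₀def, ← dist_eq_norm]
    exact hqdist.le
  set c : Fin (Module.finrank ℝ ↥W₀) → ℝ := fun l => bW.repr ⟨d₀, hd₀W⟩ l with hcdef
  set η : (ι₁ ⊕ ι₂) → X := ∑ l, c l • ξs l with hηdef
  have hη𝒴 : η ∈ 𝒴 := Submodule.sum_mem _ fun l _ => Submodule.smul_mem _ _ (hξs1 l)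
  have hLη : L η = d₀ := by
    rw [hηdef, map_sum]
    have hterm : ∀ l, L (c l • ξs l) = c l • ((bW l : ↥W₀) : ((ι₁ ⊕ ι₂) × J → ℝ)) := by
      intro l
      rw [map_smul, hξs2 l]
    rw [Finset.sum_congr rfl fun l _ => hterm l]
    have hrepr := bW.sum_repr ⟨d₀, hd₀W⟩
    have hco := congrArg (Subtype.val) hrepr
    push_cast at hco
    exact hco
  have hcb : ∀ l, |c l| ≤ ‖CW l‖ * ‖d₀‖ := by
    intro l
    have hceq : c l = CW l ⟨d₀, hd₀W⟩ := rfl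
    rw [hceq]
    calc |CW l ⟨d₀, hd₀W⟩| = ‖CW l ⟨d₀, hd₀W⟩‖ := (Real.norm_eq_abs _).symm
    _ ≤ ‖CW l‖ * ‖(⟨d₀, hd₀W⟩ : ↥W₀)‖ := (CW l).le_opNorm _
    _ = ‖CW l‖ * ‖d₀‖ := rfl
  have hηb : ∀ k, ‖∑ i, g i (w k) • η i‖ ≤ κ' * ‖d₀‖ := by
    intro k
    have hexp : ∑ i, g i (w k) • η i = ∑ l, c l • ∑ i, g i (w k) • ξs l i := by
      have hpt : ∀ i, g i (w k) • η i = ∑ l, c l • (g i (w k) • ξs l i) := by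
        intro i
        rw [hηdef]
        simp only [Finset.sum_apply, Pi.smul_apply]
        rw [Finset.smul_sum]
        exact Finset.sum_congr rfl fun l _ => smul_comm _ _ _
      rw [Finset.sum_congr rfl fun i _ => hpt i, Finset.sum_comm]
      exact Finset.sum_congr rfl fun l _ => (Finset.smul_sum).symm
    rw [hexp]
    calc ‖∑ l, c l • ∑ i, g i (w k) • ξs l i‖ ≤ ∑ l, ‖c l • ∑ i, g i (w k) • ξs l i‖ :=
          norm_sum_le _ _
    _ ≤ ∑ l, (‖CW l‖ * ‖d₀‖) * Cl l := by
        refine Finset.sum_le_sum fun l _ => ?_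
        rw [norm_smul, Real.norm_eq_abs]
        exact mul_le_mul (hcb l) (hClb l k) (norm_nonneg _)
          (mul_nonneg (norm_nonneg (CW l)) (norm_nonneg d₀))
    _ = κ' * ‖d₀‖ := by
        rw [hκ'def, Finset.sum_mul]
        exact Finset.sum_congr rfl fun l _ => by ring
  refine ⟨ξ₀ + η, ?_, ?_, ?_⟩
  · exact (hmem𝒴 _).1 (Submodule.add_mem _ hξ₀.1 hη𝒴)
  · intro j i
    have hLx : L (ξ₀ + η) = p₀ := by
      rw [map_add, hLη, hd₀def]
      abel
    have := congrFun hLx (i, j)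
    rw [hL] at this
    exact this
  · have hxb : ∀ k, ‖∑ i, g i (w k) • (ξ₀ + η) i‖ ≤ (ρ + δ) + κ' * δ := by
      intro k
      have hsplit : ∑ i, g i (w k) • (ξ₀ + η) i
          = (∑ i, g i (w k) • ξ₀ i) + ∑ i, g i (w k) • η i := by
        rw [← Finset.sum_add_distrib]
        refine Finset.sum_congr rfl fun i _ => ?_
        simp only [Pi.add_apply, smul_add]
      rw [hsplit]
      calc ‖(∑ i, g i (w k) • ξ₀ i) + ∑ i, g i (w k) • η i‖
          ≤ ‖∑ i, g i (w k) • ξ₀ i‖ + ‖∑ i, g i (w k) • η i‖ := norm_add_le _ _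
      _ ≤ (ρ + δ) + κ' * ‖d₀‖ := add_le_add (hξ₀.2 k) (hηb k)
      _ ≤ (ρ + δ) + κ' * δ := by
          exact add_le_add_right (mul_le_mul_of_nonneg_left hd₀n hκ'0) _
    have hball : ∀ v : X, ‖v‖ ≤ 1 →
        ‖∑ i, g i v • (ξ₀ + η) i‖ ≤ (1 + δ₀) * ((ρ + δ) + κ' * δ) := by
      refine htnetkey _ _ ?_
      intro w' hw'
      have := hxb (Sum.inl ⟨w', hw'⟩)
      exact this
    have harith : (1 + δ₀) * ((ρ + δ) + κ' * δ) ≤ ρ + ε := by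
      have h1 : δ₀ ≤ 1 := min_le_left _ _
      have h2' : δ₀ ≤ ε / (2 * (ρ + 1)) := min_le_right _ _
      have h4 : δ ≤ ε / (4 * (1 + κ')) := min_le_right _ _
      have h5 : δ * (1 + κ') ≤ ε / 4 := by
        have hmul := mul_le_mul_of_nonneg_right h4 (by positivity : (0:ℝ) ≤ 1 + κ')
        have heq : ε / (4 * (1 + κ')) * (1 + κ') = ε / 4 := by
          have hne : (1 + κ') ≠ 0 := by positivity
          field_simp
        linarith
      have h6 : δ₀ * ρ ≤ ε / 2 := by
        have hmul := mul_le_mul_of_nonneg_right h2' (by positivity : (0:ℝ) ≤ ρ + 1)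
        have heq : ε / (2 * (ρ + 1)) * (ρ + 1) = ε / 2 := by
          have hne : (ρ + 1) ≠ 0 := by positivity
          field_simp
        nlinarith [hδ₀.le]
      have h7 : δ₀ * (δ * (1 + κ')) ≤ ε / 4 := by
        nlinarith [hδ₀.le, h5, h1, mul_nonneg hδpos.le (by positivity : (0:ℝ) ≤ 1 + κ')]
      nlinarith [h5, h6, h7, hδ₀.le, hδpos.le, hκ'0]
    have hCfin : 0 ≤ (1 + δ₀) * ((ρ + δ) + κ' * δ) := by positivity
    intro v
    calc ‖∑ i, g i v • (ξ₀ + η) i‖ ≤ ((1 + δ₀) * ((ρ + δ) + κ' * δ)) * ‖v‖ :=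
          scale_bound g (ξ₀ + η) _ hCfin hball v
    _ ≤ (ρ + ε) * ‖v‖ := mul_le_mul_of_nonneg_right harith (norm_nonneg _)


end Aux

/-- Corollary 4.3: the `π_λ`-property of `(X*, Y^⊥)` gives projections on `X`
whose adjoints fix a given finite-dimensional subspace of `X*`. -/
theorem pi_pair_dual_gives_conjugate_projections
    (X : Type*) [NormedAddCommGroup X] [NormedSpace ℝ X] [CompleteSpace X]
    (Y : Submodule ℝ X) (hY : IsClosed (Y : Set X))
    (lam : ℝ) (h : HasPiPair lam (ann Y))
    (F : Submodule ℝ (StrongDual ℝ X)) (hF : FiniteDimensional ℝ F)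
    (ε : ℝ) (hε : 0 < ε) :
    ∃ P : X →L[ℝ] X, FinRank P ∧ (∀ x, P (P x) = P x) ∧ (∀ y ∈ Y, P y ∈ Y) ∧
      ‖P‖ ≤ lam + ε ∧ ∀ f ∈ F, dualOp P f = f := by
  classical
  obtain ⟨Q, hQfr, hQidem, hQann, hQnorm, hQfix⟩ := h F hF (ε/2) (half_pos hε)
  letI : AddCommGroup (StrongDual ℝ X) := ContinuousLinearMap.addCommGroup
  haveI hGfin : FiniteDimensional ℝ
      (LinearMap.range (Q : StrongDual ℝ X →ₗ[ℝ] StrongDual ℝ X)) := hQfr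
  set G : Submodule ℝ (StrongDual ℝ X) := LinearMap.range (Q : StrongDual ℝ X →ₗ[ℝ] StrongDual ℝ X) with hGdef
  set G₀ : Submodule ℝ ↥G := Submodule.comap G.subtype (G ⊓ ann Y) with hG₀def
  obtain ⟨G₁, hcompl⟩ := Submodule.exists_isCompl (K := ℝ) (V := ↥G) G₀
  haveI : FiniteDimensional ℝ ↥G₀ := inferInstance
  haveI : FiniteDimensional ℝ ↥G₁ := inferInstance
  haveI : Module.Free ℝ ↥G₀ := Module.Free.of_divisionRing ℝ ↥G₀
  haveI : Module.Free ℝ ↥G₁ := Module.Free.of_divisionRing ℝ ↥G₁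
  set b₁ := Module.finBasis ℝ ↥G₁ with hb₁def
  set b₀ := Module.finBasis ℝ ↥G₀ with hb₀def
  set eqv := Submodule.prodEquivOfIsCompl G₁ G₀ hcompl.symm with heqvdef
  set b : Module.Basis (Fin (Module.finrank ℝ ↥G₁) ⊕ Fin (Module.finrank ℝ ↥G₀)) ℝ ↥G :=
    (b₁.prod b₀).map eqv with hbdef
  set g : (Fin (Module.finrank ℝ ↥G₁) ⊕ Fin (Module.finrank ℝ ↥G₀)) → StrongDual ℝ X :=
    fun i => ((b i : ↥G) : StrongDual ℝ X) with hgdef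
  have hgind : LinearIndependent ℝ g :=
    b.linearIndependent.map' G.subtype (Submodule.ker_subtype G)
  have hQmem : ∀ f, Q f ∈ G := fun f => ⟨f, rfl⟩
  set Qres : StrongDual ℝ X →L[ℝ] ↥G := Q.codRestrict G hQmem with hQresdef
  set φ : (Fin (Module.finrank ℝ ↥G₁) ⊕ Fin (Module.finrank ℝ ↥G₀)) → StrongDual ℝ (StrongDual ℝ X) :=
    fun i => ((LinearMap.toContinuousLinearMap (b.coord i)).comp Qres) with hφdef
  have hφapp : ∀ i f, φ i f = b.repr (Qres f) i := by
    intro i f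
    show LinearMap.toContinuousLinearMap (b.coord i) (Qres f) = _
    rw [LinearMap.coe_toContinuousLinearMap']
    exact b.coord_apply i (Qres f)
  have hφ : ∀ f : StrongDual ℝ X, Q f = ∑ i, φ i f • g i := by
    intro f
    have hrepr := b.sum_repr (Qres f)
    have hco := congrArg (Subtype.val) hrepr
    push_cast at hco
    have hQc : ((Qres f : ↥G) : StrongDual ℝ X) = Q f := rfl
    rw [hQc] at hco
    rw [← hco]
    exact Finset.sum_congr rfl fun i _ => by rw [hφapp]
  -- adapted basis facts
  have hbinr : ∀ i₀, (b (Sum.inr i₀) : ↥G) ∈ G₀ := by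
    intro i₀
    rw [hbdef]
    rw [Module.Basis.map_apply]
    have hpair : (b₁.prod b₀) (Sum.inr i₀) = (0, b₀ i₀) := by
      simp [Prod.ext_iff, Module.Basis.prod_apply_inr_fst, Module.Basis.prod_apply_inr_snd]
    rw [hpair]
    rw [heqvdef]
    rw [Submodule.coe_prodEquivOfIsCompl']
    simp only [ZeroMemClass.coe_zero, zero_add]
    exact (b₀ i₀).2
  have hgY : ∀ i₀, g (Sum.inr i₀) ∈ ann Y := by
    intro i₀
    have h2 : G.subtype (b (Sum.inr i₀)) ∈ G ⊓ ann Y := Submodule.mem_comap.1 (hbinr i₀)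
    exact (Submodule.mem_inf.1 h2).2
  have hφY : ∀ i₁, ∀ f' ∈ ann Y, φ (Sum.inl i₁) f' = 0 := by
    intro i₁ f' hf'
    rw [hφapp]
    have hmem : Qres f' ∈ G₀ := by
      show Qres f' ∈ (G ⊓ ann Y).comap G.subtype
      exact Submodule.mem_comap.2 (Submodule.mem_inf.2 ⟨hQmem f', hQann f' hf'⟩)
    have hfst : ((eqv.symm (Qres f')).1 : ↥G₁) = 0 :=
      (Submodule.prodEquivOfIsCompl_symm_apply_fst_eq_zero G₁ G₀ hcompl.symm).2 hmem
    rw [hbdef, Module.Basis.map_repr]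
    rw [LinearEquiv.trans_apply]
    rw [Module.Basis.prod_repr_inl]
    rw [hfst]
    simp
  -- norm bound data
  have hρ0 : 0 ≤ lam + ε/2 := le_trans (norm_nonneg Q) hQnorm
  have hρ : ∀ v : X, ‖∑ i, g i v • φ i‖ ≤ (lam + ε/2) * ‖v‖ := by
    intro v
    refine ContinuousLinearMap.opNorm_le_bound _ (by positivity) ?_
    intro f
    have happ : (∑ i, g i v • φ i) f = (Q f) v := by
      rw [hφ f]
      simp only [ContinuousLinearMap.sum_apply, ContinuousLinearMap.smul_apply, smul_eq_mul,
        ContinuousLinearMap.coe_sum', Finset.sum_apply, ContinuousLinearMap.coe_smul',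
        Pi.smul_apply]
      exact Finset.sum_congr rfl fun i _ => mul_comm _ _
    rw [happ]
    calc ‖(Q f) v‖ ≤ ‖Q f‖ * ‖v‖ := (Q f).le_opNorm v
    _ ≤ (‖Q‖ * ‖f‖) * ‖v‖ := mul_le_mul_of_nonneg_right (Q.le_opNorm f) (norm_nonneg _)
    _ ≤ ((lam + ε/2) * ‖f‖) * ‖v‖ := by
        have := mul_le_mul_of_nonneg_right
          (mul_le_mul_of_nonneg_right hQnorm (norm_nonneg f)) (norm_nonneg v)
        exact this
    _ = (lam + ε/2) * ‖v‖ * ‖f‖ := by ring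
  -- the finite family spanning G ⊔ F
  haveI hMfin : FiniteDimensional ℝ ↥(G ⊔ F) := inferInstance
  set bM := Module.finBasis ℝ ↥(G ⊔ F) with hbMdef
  set fam : Fin (Module.finrank ℝ ↥(G ⊔ F)) → StrongDual ℝ X := fun j => ((bM j : ↥(G ⊔ F)) : StrongDual ℝ X)
    with hfamdef
  obtain ⟨x, hxY, hxfam, hxnorm⟩ :=
    operator_helly Y g φ hgind hφY fam (lam + ε/2) (ε/2) hρ0 (half_pos hε) hρ
  -- extend exactness to all of G ⊔ F
  set K : Submodule ℝ (StrongDual ℝ X) :=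
    { carrier := {f | ∀ i, f (x i) = φ i f}
      zero_mem' := by intro i; simp
      add_mem' := by
        intro f₁ f₂ hf₁ hf₂ i
        simp only [ContinuousLinearMap.add_apply, Set.mem_setOf_eq] at *
        rw [hf₁ i, hf₂ i, map_add]
      smul_mem' := by
        intro c f₁ hf₁ i
        simp only [ContinuousLinearMap.coe_smul', Pi.smul_apply, Set.mem_setOf_eq, smul_eq_mul] at *
        rw [hf₁ i, map_smul, smul_eq_mul] } with hKdef
  have hspan : G ⊔ F = Submodule.span ℝ (Set.range fam) := by
    have h1 : Set.range fam = (G ⊔ F).subtype '' (Set.range bM) := by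
      rw [hfamdef]
      rw [← Set.range_comp]
      rfl
    rw [h1, ← Submodule.map_span, bM.span_eq, Submodule.map_subtype_top]
  have hKle : G ⊔ F ≤ K := by
    rw [hspan, Submodule.span_le]
    rintro _ ⟨j, rfl⟩
    intro i
    exact hxfam j i
  have hC1 : ∀ f ∈ G ⊔ F, ∀ i, f (x i) = φ i f := fun f hf => hKle hf
  -- the projection P
  set P : X →L[ℝ] X := ∑ i, (g i).smulRight (x i) with hPdef
  have hPapply : ∀ v : X, P v = ∑ i, g i v • x i := by
    intro v
    rw [hPdef]
    simp [ContinuousLinearMap.sum_apply, ContinuousLinearMap.smulRight_apply]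
  have hgG : ∀ i, g i ∈ G ⊔ F := fun i => Submodule.mem_sup_left (b i).2
  have hQg : ∀ i, Q (g i) = g i := by
    intro i
    obtain ⟨f₀, hf₀⟩ := (b i).2
    have hf₀' : Q f₀ = g i := hf₀
    rw [← hf₀']
    exact hQidem f₀
  have hQapp : ∀ (f : StrongDual ℝ X) (v : X), (Q f) v = ∑ i, φ i f * g i v := by
    intro f v
    rw [hφ f]
    simp only [ContinuousLinearMap.coe_sum', Finset.sum_apply, ContinuousLinearMap.coe_smul',
      Pi.smul_apply, smul_eq_mul]
  have hgPv : ∀ (i) (v : X), g i (P v) = g i v := by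
    intro i v
    rw [hPapply, map_sum]
    have hterm : ∀ j, g i (g j v • x j) = φ j (g i) * g j v := by
      intro j
      rw [map_smul, smul_eq_mul, hC1 (g i) (hgG i) j]
      ring
    rw [Finset.sum_congr rfl fun j _ => hterm j]
    rw [← hQapp (g i) v, hQg i]
  refine ⟨P, ?_, ?_, ?_, ?_, ?_⟩
  · -- finite rank
    show FiniteDimensional ℝ (LinearMap.range (P : X →ₗ[ℝ] X))
    haveI := FiniteDimensional.span_of_finite ℝ (Set.finite_range x)
    refine Submodule.finiteDimensional_of_le (S₂ := Submodule.span ℝ (Set.range x)) ?_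
    rintro _ ⟨v, rfl⟩
    have : P v = ∑ i, g i v • x i := hPapply v
    show P v ∈ Submodule.span ℝ (Set.range x)
    rw [this]
    exact Submodule.sum_mem _ fun i _ =>
      Submodule.smul_mem _ _ (Submodule.subset_span (Set.mem_range_self i))
  · -- idempotent
    intro v
    rw [hPapply (P v)]
    rw [Finset.sum_congr rfl fun i _ => by rw [hgPv i v]]
    exact (hPapply v).symm
  · -- Y-invariance
    intro y hy
    rw [hPapply]
    rw [Fintype.sum_sum_type]
    refine Submodule.add_mem _ ?_ ?_
    · exact Submodule.sum_mem _ fun i₁ _ => Submodule.smul_mem _ _ (hxY i₁)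
    · have hzero : ∀ i₀, g (Sum.inr i₀) y = 0 := fun i₀ => hgY i₀ y hy
      rw [Finset.sum_congr rfl fun i₀ _ => by rw [hzero i₀, zero_smul]]
      simp
  · -- norm
    have hnn : 0 ≤ lam + ε := by linarith
    refine ContinuousLinearMap.opNorm_le_bound _ hnn ?_
    intro v
    rw [hPapply]
    calc ‖∑ i, g i v • x i‖ ≤ ((lam + ε/2) + ε/2) * ‖v‖ := hxnorm v
    _ = (lam + ε) * ‖v‖ := by ring_nf
  · -- adjoint fixes F
    intro f hf
    ext v
    show f (P v) = f v
    rw [hPapply, map_sum]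
    have hterm : ∀ i, f (g i v • x i) = φ i f * g i v := by
      intro i
      rw [map_smul, smul_eq_mul, hC1 f (Submodule.mem_sup_right hf) i]
      ring
    rw [Finset.sum_congr rfl fun i _ => hterm i]
    rw [← hQapp f v, hQfix f hf]
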